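/- arXiv:2111.09365 — 2 statements merged into one kernel-verified Lean document; each statement's English description precedes it below -/
import Mathlib

section
/- Let m ≥ 1 and L be integers and let γ : ℝ → ℂ∖{0} be a continuous function satisfying γ(t + 1) = γ(t) and γ(t + 1/m) = e^{2πiL/m} γ(t) for all t ∈ ℝ. Then the winding number of γ around the origin (over one period) is congruent to L modulo m. -/
lemma aux_int_const (g : ℝ → ℝ) (hg : Continuous g) (hint : ∀ t, ∃ n : ℤ, g t = n) :
    ∀ s t, g s = g t := by
  have main : ∀ s t, g s < g t → False := by
    intro s t h
    obtain ⟨n, hn⟩ := hint s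
    obtain ⟨k, hk⟩ := hint t
    have hnk : (n : ℝ) < k := by rw [← hn, ← hk]; exact h
    have hnk' : n + 1 ≤ k := by
      have : n < k := by exact_mod_cast hnk
      omega
    have hnk'' : (n : ℝ) + 1 ≤ (k : ℝ) := by exact_mod_cast hnk'
    have hy : (n : ℝ) + 1/2 ∈ Set.uIcc (g s) (g t) := by
      rw [hn, hk, Set.uIcc_of_le (by linarith : (n : ℝ) ≤ (k : ℝ))]
      exact Set.mem_Icc.mpr ⟨by linarith, by linarith⟩
    obtain ⟨u, _, hu⟩ := intermediate_value_uIcc (hg.continuousOn (s := Set.uIcc s t)) hy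
    obtain ⟨j, hj⟩ := hint u
    rw [hj] at hu
    have : (2 * j : ℝ) = 2 * n + 1 := by push_cast; linarith
    have : (2 * j : ℤ) = 2 * n + 1 := by exact_mod_cast this
    omega
  intro s t
  rcases lt_trichotomy (g s) (g t) with h | h | h
  · exact absurd h (fun h => main s t h)
  · exact h
  · exact absurd h (fun h => main t s h)

/-- Let `m ≥ 1`, `L ∈ ℤ`, and `γ : ℝ → ℂ∖{0}` continuous with `γ(t+1) = γ(t)` and
`γ(t+1/m) = e^{2πiL/m} γ(t)`. Then for any continuous lift `θ` of the argument of `γ`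
(i.e. `γ(t) = ‖γ(t)‖ e^{iθ(t)}`), the winding number `(θ(1) − θ(0))/2π` is an
integer congruent to `L` modulo `m`. -/
theorem stmt14 (m : ℕ) (hm : 1 ≤ m) (L : ℤ) (γ : ℝ → ℂ)
    (hγcont : Continuous γ) (hγne : ∀ t, γ t ≠ 0)
    (hper : ∀ t, γ (t + 1) = γ t)
    (hsym : ∀ t, γ (t + 1 / m) =
      Complex.exp (2 * (Real.pi : ℂ) * Complex.I * (L : ℂ) / (m : ℂ)) * γ t)
    (θ : ℝ → ℝ) (hθcont : Continuous θ)
    (hlift : ∀ t, γ t = (‖γ t‖ : ℂ) * Complex.exp ((θ t : ℂ) * Complex.I)) :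
    ∃ w : ℤ, θ 1 - θ 0 = 2 * Real.pi * (w : ℝ) ∧ (m : ℤ) ∣ (w - L) := by
  have hπ : (0:ℝ) < Real.pi := Real.pi_pos
  have hm0 : (m : ℝ) ≠ 0 := by
    have : 0 < m := hm
    exact_mod_cast this.ne'
  set c : ℝ := 2 * Real.pi * L / m with hc
  have hcC : 2 * (Real.pi : ℂ) * Complex.I * (L : ℂ) / (m : ℂ) = (c : ℂ) * Complex.I := by
    rw [hc]; push_cast; field_simp
  -- key pointwise statement
  have key : ∀ t, ∃ n : ℤ, θ (t + 1/m) = θ t + c + 2 * Real.pi * n := by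
    intro t
    have h1 := hlift (t + 1/m)
    have h2 := hlift t
    have hnorm : ‖γ (t + 1/m)‖ = ‖γ t‖ := by
      rw [hsym t, hcC, norm_mul,
        Complex.norm_exp_ofReal_mul_I, one_mul]
    have hne : (‖γ t‖ : ℂ) ≠ 0 := by
      simpa using norm_ne_zero_iff.mpr (hγne t)
    have h3 := hsym t
    rw [h1, h2, hcC, hnorm] at h3
    have hE : (‖γ t‖ : ℂ) * Complex.exp ((θ (t + 1/m) : ℂ) * Complex.I)
        = (‖γ t‖ : ℂ) * Complex.exp ((θ t : ℂ) * Complex.I + (c : ℂ) * Complex.I) := by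
      rw [Complex.exp_add, h3]; ring
    have hexp := mul_left_cancel₀ hne hE
    rw [Complex.exp_eq_exp_iff_exists_int] at hexp
    obtain ⟨n, hn⟩ := hexp
    refine ⟨n, ?_⟩
    have h4 := congrArg Complex.im hn
    simp at h4
    rw [one_div]
    linarith
  -- the jump is constant
  set g : ℝ → ℝ := fun t => (θ (t + 1/m) - θ t - c) / (2 * Real.pi) with hg
  have hgcont : Continuous g := by
    apply Continuous.div_const
    exact ((hθcont.comp (continuous_id.add continuous_const)).sub hθcont).sub continuous_const
  have hgint : ∀ t, ∃ n : ℤ, g t = n := by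
    intro t
    obtain ⟨n, hn⟩ := key t
    refine ⟨n, ?_⟩
    show (θ (t + 1/m) - θ t - c) / (2 * Real.pi) = n
    rw [hn, div_eq_iff (by positivity : (2 * Real.pi) ≠ 0)]
    ring
  obtain ⟨k, hk⟩ := hgint 0
  have hconst : ∀ t, θ (t + 1/m) = θ t + c + 2 * Real.pi * k := by
    intro t
    have h5 := aux_int_const g hgcont hgint t 0
    rw [hk] at h5
    have h6 : (θ (t + 1/m) - θ t - c) / (2 * Real.pi) = k := h5
    rw [div_eq_iff (by positivity : (2 * Real.pi) ≠ 0)] at h6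
    linarith
  -- telescoping
  have hstep : ∀ j : ℕ, θ ((j : ℝ) / m) = θ 0 + j * (c + 2 * Real.pi * k) := by
    intro j
    induction j with
    | zero => simp
    | succ j ih =>
      have : ((j : ℝ) + 1) / m = (j : ℝ) / m + 1 / m := by ring
      push_cast
      rw [this, hconst, ih]
      ring
  have h1 : θ 1 = θ 0 + m * (c + 2 * Real.pi * k) := by
    have := hstep m
    rwa [div_self hm0] at this
  refine ⟨L + m * k, ?_, ⟨k, by ring⟩⟩
  have hmc : (m : ℝ) * c = 2 * Real.pi * L := by
    rw [hc]; field_simp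
  push_cast
  rw [h1]
  ring_nf
  ring_nf at hmc
  linarith
end

section
/- Let u : ℝ³ → ℂ² be a smooth map with ‖u(k)‖ = 1 for all k and u(k + 2π e_μ) = u(k) for each standard basis vector e_μ. Define the Berry connection A_μ(k) = i⟨u(k), ∂_μ u(k)⟩ (a real-valued 1-form), the Berry curvature F = ∇ × A, and the Chern–Simons integral χ[u] = −(1/4π²) ∫_{[0,2π]³} F·A d³k. If u′(k) := conj(u(−k)) (componentwise complex conjugation composed with momentum inversion), then A′(k) = A(−k), F′(k) = −F(−k), and consequently χ[u′] = −χ[u]. -/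
open MeasureTheory Complex

noncomputable section

/-- Three-dimensional momentum space. -/
abbrev E3 : Type := EuclideanSpace ℝ (Fin 3)
/-- The two-component intra-cell Hilbert space. -/
abbrev C2 : Type := EuclideanSpace ℂ (Fin 2)

/-- The standard basis vector `e_μ` of momentum space. -/
def bvec (μ : Fin 3) : E3 := EuclideanSpace.single μ (1 : ℝ)

/-- The Berry connection `A_μ(k) = i⟨u(k), ∂_μ u(k)⟩` (real-valued since `‖u‖ ≡ 1`). -/
def berryA (u : E3 → C2) (μ : Fin 3) (k : E3) : ℝ :=
  (Complex.I * (inner ℂ (u k) (fderiv ℝ u k (bvec μ)) : ℂ)).re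

/-- Partial derivative `∂_μ f` of a real-valued function on momentum space. -/
def pd (f : E3 → ℝ) (μ : Fin 3) (k : E3) : ℝ := fderiv ℝ f k (bvec μ)

/-- The Berry curvature `F = ∇ × A`, componentwise `F_μ = ∂_{μ+1}A_{μ+2} − ∂_{μ+2}A_{μ+1}`. -/
def berryF (u : E3 → C2) (μ : Fin 3) (k : E3) : ℝ :=
  pd (berryA u (μ + 1)) (μ + 2) k - pd (berryA u (μ + 2)) (μ + 1) k

/-- The Chern–Simons integral `χ[u] = −(1/4π²)∫_{[0,2π]³} F·A d³k`. -/
def hopfCS (u : E3 → C2) : ℝ :=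
  -(1 / (4 * Real.pi ^ 2)) *
    ∫ k in {k : E3 | ∀ i, k i ∈ Set.Icc (0 : ℝ) (2 * Real.pi)},
      ∑ μ, berryF u μ k * berryA u μ k

/-- Time reversal of the band wave function: `u′(k) = conj(u(−k))`. -/
def timeRev (u : E3 → C2) : E3 → C2 := fun k => WithLp.toLp 2 (fun i => starRingEnd ℂ (u (-k) i) : Fin 2 → ℂ)

/-- Componentwise conjugation as a continuous ℝ-linear map on `C2`. -/
def conjCLM : C2 →L[ℝ] C2 :=
  LinearMap.toContinuousLinearMap
    { toFun := fun v => WithLp.toLp 2 (fun i => starRingEnd ℂ (v i) : Fin 2 → ℂ)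
      map_add' := by
        intro v w; ext i
        exact map_add (starRingEnd ℂ) (v i) (w i)
      map_smul' := by
        intro r v; ext i
        show starRingEnd ℂ (r • v i) = r • starRingEnd ℂ (v i)
        rw [Complex.real_smul, Complex.real_smul, map_mul, Complex.conj_ofReal] }

lemma conjCLM_apply (v : C2) (i : Fin 2) : conjCLM v i = starRingEnd ℂ (v i) := rfl

lemma inner_conjCLM (a b : C2) :
    (inner ℂ (conjCLM a) (conjCLM b) : ℂ) = starRingEnd ℂ (inner ℂ a b : ℂ) := by
  simp only [PiLp.inner_apply, RCLike.inner_apply, map_sum, map_mul, conjCLM_apply,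
    RingHomCompTriple.comp_apply, RingHom.id_apply, Complex.conj_conj]


lemma timeRev_eq (u : E3 → C2) : timeRev u = fun k => conjCLM (u (-k)) := rfl

lemma fderiv_timeRev (u : E3 → C2) (hd : Differentiable ℝ u) (k : E3) (w : E3) :
    fderiv ℝ (timeRev u) k w = -(conjCLM (fderiv ℝ u (-k) w)) := by
  have h1 : HasFDerivAt (fun x : E3 => -x) (-(ContinuousLinearMap.id ℝ E3)) k :=
    (hasFDerivAt_id k).neg
  have h2 : HasFDerivAt u (fderiv ℝ u (-k)) (-k) := (hd (-k)).hasFDerivAt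
  have h3 := (conjCLM.hasFDerivAt.comp k ((h2.comp k h1)))
  have h4 : HasFDerivAt (timeRev u)
      ((conjCLM.comp (fderiv ℝ u (-k))).comp (-(ContinuousLinearMap.id ℝ E3))) k := h3
  rw [h4.fderiv]
  simp

/-- Part 1: the Berry connection of the time-reversed map. -/
lemma berryA_timeRev (u : E3 → C2) (hd : Differentiable ℝ u) (μ : Fin 3) (k : E3) :
    berryA (timeRev u) μ k = berryA u μ (-k) := by
  unfold berryA
  rw [fderiv_timeRev u hd k (bvec μ)]
  rw [timeRev_eq]
  simp only [inner_neg_right, inner_conjCLM]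
  set w : ℂ := inner ℂ (u (-k)) (fderiv ℝ u (-k) (bvec μ))
  simp [Complex.mul_re]

lemma pd_comp_neg (f : E3 → ℝ) (hf : Differentiable ℝ f) (ν : Fin 3) (k : E3) :
    pd (fun x => f (-x)) ν k = -pd f ν (-k) := by
  have h1 : HasFDerivAt (fun x : E3 => -x) (-(ContinuousLinearMap.id ℝ E3)) k :=
    (hasFDerivAt_id k).neg
  have h : HasFDerivAt (fun x => f (-x))
      ((fderiv ℝ f (-k)).comp (-(ContinuousLinearMap.id ℝ E3))) k :=
    (hf (-k)).hasFDerivAt.comp k h1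
  unfold pd
  rw [h.fderiv]
  simp

lemma contDiff_berryA (u : E3 → C2) (hsm : ContDiff ℝ (⊤ : ℕ∞) u) (μ : Fin 3) :
    ContDiff ℝ (⊤ : ℕ∞) (berryA u μ) := by
  have hDu : ContDiff ℝ (⊤ : ℕ∞) (fderiv ℝ u) := (contDiff_infty_iff_fderiv.mp hsm).2
  have hv : ContDiff ℝ (⊤ : ℕ∞) (fun k => fderiv ℝ u k (bvec μ)) :=
    hDu.clm_apply contDiff_const
  have hinner : ContDiff ℝ (⊤ : ℕ∞) (fun k => (inner ℂ (u k) (fderiv ℝ u k (bvec μ)) : ℂ)) :=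
    hsm.inner ℂ hv
  have : ContDiff ℝ (⊤ : ℕ∞) (fun k => Complex.I * (inner ℂ (u k) (fderiv ℝ u k (bvec μ)) : ℂ)) :=
    contDiff_const.mul hinner
  exact Complex.reCLM.contDiff.comp this

/-- Part 2: the Berry curvature of the time-reversed map. -/
lemma berryF_timeRev (u : E3 → C2) (hsm : ContDiff ℝ (⊤ : ℕ∞) u) (μ : Fin 3) (k : E3) :
    berryF (timeRev u) μ k = -berryF u μ (-k) := by
  have hd : Differentiable ℝ u := hsm.differentiable (by simp)
  have hA : ∀ ν : Fin 3, berryA (timeRev u) ν = fun x => berryA u ν (-x) :=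
    fun ν => funext fun x => berryA_timeRev u hd ν x
  unfold berryF
  rw [hA, hA, pd_comp_neg _ ((contDiff_berryA u hsm _).differentiable (by simp)),
    pd_comp_neg _ ((contDiff_berryA u hsm _).differentiable (by simp))]
  ring

/-- Periodicity transfers to the derivative. -/
lemma fderiv_per {F : Type*} [NormedAddCommGroup F] [NormedSpace ℝ F]
    (f : E3 → F) (hd : Differentiable ℝ f) (c : E3) (hc : ∀ x, f (x + c) = f x) (k : E3) :
    fderiv ℝ f (k + c) = fderiv ℝ f k := by
  have h : HasFDerivAt (fun x : E3 => f (x + c))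
      ((fderiv ℝ f (k + c)).comp (ContinuousLinearMap.id ℝ E3)) k :=
    (hd (k + c)).hasFDerivAt.comp k ((hasFDerivAt_id k).add_const c)
  have he : (fun x : E3 => f (x + c)) = f := funext hc
  rw [he] at h
  simpa using h.fderiv.symm

/-- Time reversal acts on the Berry connection as `A′(k) = A(−k)`, on the Berry
curvature as `F′(k) = −F(−k)`, and consequently the Hopf (Chern–Simons) invariant
is odd under time reversal: `χ[u′] = −χ[u]`. -/
theorem stmt16 (u : E3 → C2) (hsm : ContDiff ℝ (⊤ : ℕ∞) u) (hnorm : ∀ k, ‖u k‖ = 1)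
    (hper : ∀ (k : E3) (μ : Fin 3), u (k + (2 * Real.pi) • bvec μ) = u k) :
    (∀ (μ : Fin 3) (k : E3), berryA (timeRev u) μ k = berryA u μ (-k)) ∧
    (∀ (μ : Fin 3) (k : E3), berryF (timeRev u) μ k = -berryF u μ (-k)) ∧
    hopfCS (timeRev u) = -hopfCS u := by
  have hd : Differentiable ℝ u := hsm.differentiable (by simp)
  refine ⟨fun μ k => berryA_timeRev u hd μ k, fun μ k => berryF_timeRev u hsm μ k, ?_⟩
  -- the integrand and its periodicity
  set G : E3 → ℝ := fun k => ∑ μ, berryF u μ k * berryA u μ k with hG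
  have hAper : ∀ (ν μ : Fin 3) (k : E3),
      berryA u ν (k + (2 * Real.pi) • bvec μ) = berryA u ν k := by
    intro ν μ k
    unfold berryA
    rw [hper k μ, fderiv_per u hd _ (fun x => hper x μ)]
  have hFper : ∀ (ν μ : Fin 3) (k : E3),
      berryF u ν (k + (2 * Real.pi) • bvec μ) = berryF u ν k := by
    intro ν μ k
    unfold berryF pd
    rw [fderiv_per (berryA u (ν+1)) ((contDiff_berryA u hsm _).differentiable (by simp)) _
        (fun x => hAper (ν+1) μ x),
      fderiv_per (berryA u (ν+2)) ((contDiff_berryA u hsm _).differentiable (by simp)) _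
        (fun x => hAper (ν+2) μ x)]
  have hGper : ∀ (μ : Fin 3) (k : E3), G (k + (2 * Real.pi) • bvec μ) = G k := by
    intro μ k
    simp only [hG]
    exact Finset.sum_congr rfl fun ν _ => by rw [hFper ν μ k, hAper ν μ k]
  -- integrand of time-reversed map
  have hG' : ∀ k, (∑ μ, berryF (timeRev u) μ k * berryA (timeRev u) μ k) = -G (-k) := by
    intro k
    simp only [hG, ← Finset.sum_neg_distrib]
    exact Finset.sum_congr rfl fun μ _ => by
      rw [berryF_timeRev u hsm μ k, berryA_timeRev u hd μ k]; ring
  -- the box and change of variables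
  set S : Set E3 := {k : E3 | ∀ i, k i ∈ Set.Icc (0 : ℝ) (2 * Real.pi)} with hS
  set v : E3 := (2 * Real.pi) • bvec 0 + (2 * Real.pi) • bvec 1 + (2 * Real.pi) • bvec 2 with hv
  have hb : ∀ μ i : Fin 3, (bvec μ : E3) i = if i = μ then 1 else 0 :=
    fun μ i => EuclideanSpace.single_apply μ 1 i
  have hvi : ∀ i : Fin 3, v i = 2 * Real.pi := by
    intro i
    fin_cases i <;> simp [hv, PiLp.add_apply, PiLp.smul_apply, hb]
  have hGv : ∀ k, G (k + v) = G k := by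
    intro k
    rw [hv, show k + ((2 * Real.pi) • bvec 0 + (2 * Real.pi) • bvec 1 + (2 * Real.pi) • bvec 2)
      = ((k + (2 * Real.pi) • bvec 0) + (2 * Real.pi) • bvec 1) + (2 * Real.pi) • bvec 2 by abel,
      hGper 2, hGper 1, hGper 0]
  have hsets : (fun x : E3 => x + v) ⁻¹' S = Neg.neg ⁻¹' S := by
    ext x
    simp only [Set.mem_preimage, hS, Set.mem_setOf_eq, Set.mem_Icc]
    constructor
    · intro h i
      have := h i
      rw [PiLp.add_apply, hvi i] at this
      rw [PiLp.neg_apply]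
      constructor <;> linarith [this.1, this.2]
    · intro h i
      have := h i
      rw [PiLp.neg_apply] at this
      rw [PiLp.add_apply, hvi i]
      constructor <;> linarith [this.1, this.2]
  have hneg : ∫ k in S, G (-k) = ∫ k in S, G k := by
    have h1 : MeasurePreserving (Neg.neg : E3 → E3) volume volume :=
      Measure.measurePreserving_neg volume
    have h2 : MeasurePreserving (fun x : E3 => x + v) volume volume :=
      measurePreserving_add_right volume v
    have e1 : MeasurableEmbedding (Neg.neg : E3 → E3) :=
      (MeasurableEquiv.neg E3).measurableEmbedding
    have e2 : MeasurableEmbedding (fun x : E3 => x + v) :=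
      (MeasurableEquiv.addRight v).measurableEmbedding
    calc ∫ k in S, G (-k)
        = ∫ k in Neg.neg ⁻¹' (Neg.neg ⁻¹' S), G (-k) := by
          rw [show Neg.neg ⁻¹' (Neg.neg ⁻¹' S) = S by ext x; simp]
      _ = ∫ k in Neg.neg ⁻¹' S, G k := h1.setIntegral_preimage_emb e1 G _
      _ = ∫ k in (fun x : E3 => x + v) ⁻¹' S, G (k + v) := by
          rw [hsets]; simp only [hGv]
      _ = ∫ k in S, G k := h2.setIntegral_preimage_emb e2 G S
  -- conclude
  unfold hopfCS
  rw [show {k : E3 | ∀ i, k i ∈ Set.Icc (0 : ℝ) (2 * Real.pi)} = S from rfl]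
  have : (∫ k in S, ∑ μ, berryF (timeRev u) μ k * berryA (timeRev u) μ k)
      = -∫ k in S, G k := by
    rw [show (fun k => ∑ μ, berryF (timeRev u) μ k * berryA (timeRev u) μ k)
        = fun k => -G (-k) from funext hG']
    rw [integral_neg, hneg]
  rw [this]
  ring

end
end
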